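/- Let C be a category with two objects X and Y such that the hom-sets C(X,Y) and C(Y,X) are nonempty, the endomorphism monoid C(X,X) has exactly 3 elements, and the endomorphism monoid C(Y,Y) is isomorphic as a monoid to C_5. Then C(X,X) is isomorphic as a monoid to C_5. -/

import Mathlib

open CategoryTheory

/-- The three-element monoid `C₅ = {1, e, a}`: the group `ℤ/2 = {e, a}` with a new
identity element `1` adjoined (so `e·e = e`, `a·a = e`, `a·e = e·a = a`). -/
abbrev C5 : Type := WithOne (Multiplicative (ZMod 2))

namespace Stmt19Aux

def eC : C5 := ↑(Multiplicative.ofAdd (0 : ZMod 2))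
def aC : C5 := ↑(Multiplicative.ofAdd (1 : ZMod 2))

lemma cardC5 : Nat.card C5 = 3 := by
  have h1 : Nat.card C5 = Nat.card (Option (Multiplicative (ZMod 2))) :=
    Nat.card_congr (Equiv.refl _)
  rw [h1, Nat.card_eq_fintype_card]; simp [Fintype.card_option]

lemma enumC5 : ∀ c : C5, c = 1 ∨ c = eC ∨ c = aC := by
  intro c
  induction c using WithOne.recOneCoe with
  | one => left; rfl
  | coe a =>
    right
    rcases (by decide : ∀ x : ZMod 2, x = 0 ∨ x = 1) (Multiplicative.toAdd a) with h | h
    · left; rw [eC, ← h]; rfl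
    · right; rw [aC, ← h]; rfl

lemma heC1 : eC ≠ 1 := WithOne.coe_ne_one
lemma haC1 : aC ≠ 1 := WithOne.coe_ne_one
lemma heCaC : eC ≠ aC := by
  simp only [eC, aC, Ne, WithOne.coe_inj]; decide
lemma heCeC : eC * eC = eC := by
  simp only [eC, ← WithOne.coe_mul, WithOne.coe_inj]; decide
lemma haCaC : aC * aC = eC := by
  simp only [eC, aC, ← WithOne.coe_mul, WithOne.coe_inj]; decide
lemma heCaC' : eC * aC = aC := by
  simp only [eC, aC, ← WithOne.coe_mul, WithOne.coe_inj]; decide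
lemma haCeC' : aC * eC = aC := by
  simp only [eC, aC, ← WithOne.coe_mul, WithOne.coe_inj]; decide

/-- A type of cardinality `3` with three distinct listed elements consists
exactly of those elements. -/
lemma enum3 {M : Type*} (h : Nat.card M = 3) (x y z : M)
    (hxy : x ≠ y) (hxz : x ≠ z) (hyz : y ≠ z) : ∀ m : M, m = x ∨ m = y ∨ m = z := by
  classical
  have hfin : Finite M := Nat.finite_of_card_ne_zero (by omega)
  have := Fintype.ofFinite M
  intro m
  have hc : ({x, y, z} : Finset M).card = 3 := by
    rw [Finset.card_insert_of_notMem (by simp [hxy, hxz]),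
        Finset.card_insert_of_notMem (by simp [hyz]), Finset.card_singleton]
  have huniv : ({x, y, z} : Finset M) = Finset.univ :=
    Finset.eq_univ_of_card _ (by rw [hc, ← Nat.card_eq_fintype_card, h])
  have hm : m ∈ ({x, y, z} : Finset M) := huniv ▸ Finset.mem_univ m
  simpa using hm

/-- If `X` is a retract of `Y` and the endomorphism monoids have the same finite
cardinality, then they are isomorphic. -/
lemma split_mulequiv {C : Type*} [Category C] {X Y : C} (w : X ⟶ Y) (v : Y ⟶ X)
    (hwv : w ≫ v = 𝟙 X) [Finite (CategoryTheory.End Y)]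
    (hc : Nat.card (CategoryTheory.End X) = Nat.card (CategoryTheory.End Y)) :
    Nonempty (CategoryTheory.End X ≃* CategoryTheory.End Y) := by
  let Θ : CategoryTheory.End X → CategoryTheory.End Y := fun f => v ≫ (f : X ⟶ X) ≫ w
  have hmul : ∀ f g : CategoryTheory.End X, Θ (f * g) = Θ f * Θ g := by
    intro f g
    simp only [Θ, End.mul_def, Category.assoc, reassoc_of% hwv]
  have hinj : Function.Injective Θ := by
    intro f g hfg
    have := congrArg (fun k : CategoryTheory.End Y => w ≫ (k : Y ⟶ Y) ≫ v) hfg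
    simpa [Θ, Category.assoc, reassoc_of% hwv, hwv] using this
  have hbij : Function.Bijective Θ := (Nat.bijective_iff_injective_and_card Θ).2 ⟨hinj, hc⟩
  exact ⟨{ toEquiv := Equiv.ofBijective Θ hbij, map_mul' := hmul }⟩

end Stmt19Aux

open Stmt19Aux in
/-- in a category with two objects `X, Y`, nonempty hom-sets in both
directions, `|C(X,X)| = 3` and `C(Y,Y) ≅ C₅` as a monoid, one also has `C(X,X) ≅ C₅`. -/
theorem stmt_19 {C : Type*} [Category C] (X Y : C)
    (hL : Nonempty (X ⟶ Y)) (hR : Nonempty (Y ⟶ X))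
    (hcard : Nat.card (X ⟶ X) = 3)
    (hY : Nonempty (CategoryTheory.End Y ≃* C5)) :
    Nonempty (CategoryTheory.End X ≃* C5) := by
  classical
  obtain ⟨u⟩ := hL
  obtain ⟨v⟩ := hR
  obtain ⟨φ⟩ := hY
  have hcX : Nat.card (CategoryTheory.End X) = 3 := hcard
  have hcY : Nat.card (CategoryTheory.End Y) = 3 := by
    rw [Nat.card_congr φ.toEquiv]; exact cardC5
  have finX : Finite (CategoryTheory.End X) := Nat.finite_of_card_ne_zero (by omega)
  have finY : Finite (CategoryTheory.End Y) := Nat.finite_of_card_ne_zero (by omega)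
  set t : CategoryTheory.End Y := v ≫ u with ht
  by_cases h1 : t = 1
  · -- `v ≫ u = 𝟙 Y`, so `Y` is a retract of `X`.
    have hvu : v ≫ u = 𝟙 Y := h1
    obtain ⟨ψ⟩ := split_mulequiv v u hvu (hcY.trans hcX.symm)
    exact ⟨ψ.symm.trans φ⟩
  · -- `t ∈ {e, a}`, so `t * t = e'` where `e' = φ⁻¹ e`.
    set e' : CategoryTheory.End Y := φ.symm eC with he'
    set a' : CategoryTheory.End Y := φ.symm aC with ha'
    have hφe : φ e' = eC := φ.apply_symm_apply eC
    have hφa : φ a' = aC := φ.apply_symm_apply aC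
    have htt : t * t = e' := by
      have h2 : φ t = eC ∨ φ t = aC := by
        rcases enumC5 (φ t) with h | h | h
        · exact absurd (φ.injective (h.trans (map_one φ).symm)) h1
        · exact Or.inl h
        · exact Or.inr h
      apply φ.injective
      rw [map_mul, hφe]
      rcases h2 with h | h <;> rw [h]
      · exact heCeC
      · exact haCaC
    -- monoid relations transported to `End Y`
    have hee : e' * e' = e' := by
      apply φ.injective; rw [map_mul, hφe, heCeC]
    have haa : a' * a' = e' := by
      apply φ.injective; rw [map_mul, hφa, hφe, haCaC]
    have hea : e' * a' = a' := by
      apply φ.injective; rw [map_mul, hφe, hφa, heCaC']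
    have hae : a' * e' = a' := by
      apply φ.injective; rw [map_mul, hφe, hφa, haCeC']
    have hane : a' ≠ e' := fun h => heCaC (by rw [← hφe, ← hφa, h])
    have he1 : e' ≠ 1 := fun h => heC1 (by rw [← hφe, h, map_one])
    -- morphism-level versions
    have hee' : (e' : Y ⟶ Y) ≫ e' = e' := by rw [show (e' : Y ⟶ Y) ≫ e' = e' * e' from rfl, hee]
    have haa' : (a' : Y ⟶ Y) ≫ a' = e' := by rw [show (a' : Y ⟶ Y) ≫ a' = a' * a' from rfl, haa]
    have hea' : (e' : Y ⟶ Y) ≫ a' = a' := by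
      rw [show (e' : Y ⟶ Y) ≫ a' = a' * e' from rfl, hae]
    have hae' : (a' : Y ⟶ Y) ≫ e' = a' := by
      rw [show (a' : Y ⟶ Y) ≫ e' = e' * a' from rfl, hea]
    -- the modified section `u' = u ≫ t` satisfies `v ≫ u' = e'`
    set u' : X ⟶ Y := u ≫ (t : Y ⟶ Y) with hu'
    have hvu' : v ≫ u' = (e' : Y ⟶ Y) := by
      rw [hu', ← Category.assoc, ← ht]
      rw [show (t : Y ⟶ Y) ≫ t = t * t from rfl, htt]
    -- the sandwich map and the two special elements of End X
    have hP : ∀ g h : Y ⟶ Y,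
        (show CategoryTheory.End X from u' ≫ g ≫ v) * (show CategoryTheory.End X from u' ≫ h ≫ v) = u' ≫ (h ≫ e' ≫ g) ≫ v := by
      intro g h
      simp only [End.mul_def, Category.assoc, reassoc_of% hvu']
    set p : CategoryTheory.End X := u' ≫ (e' : Y ⟶ Y) ≫ v with hp
    set b : CategoryTheory.End X := u' ≫ (a' : Y ⟶ Y) ≫ v with hb
    have hpp : p * p = p := by rw [hp, hP, hee', hee']
    have hbb : b * b = p := by rw [hb, hp, hP, hea', haa']
    have hpb : p * b = b := by rw [hp, hb, hP, hee', hae']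
    have hbp : b * p = b := by rw [hp, hb, hP, hea', hea']
    have hbnep : b ≠ p := by
      intro h
      apply hane
      have h2 := congrArg (fun k : CategoryTheory.End X => v ≫ (k : X ⟶ X) ≫ u') h
      simpa [hb, hp, Category.assoc, reassoc_of% hvu', hvu', hee', hea', hae'] using h2
    by_cases hp1 : p = 1
    · -- `X` is a retract of `Y`, so `End X ≅ End Y ≅ C5`.
      have hsplit : (u' ≫ (e' : Y ⟶ Y)) ≫ v = 𝟙 X := by
        rw [Category.assoc, ← hp, hp1]; rfl
      obtain ⟨ψ⟩ := split_mulequiv (u' ≫ (e' : Y ⟶ Y)) v hsplit (hcX.trans hcY.symm)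
      exact ⟨ψ.trans φ⟩
    · have hb1 : b ≠ 1 := by
        intro h
        apply hp1
        rw [← hbb, h, one_mul]
      have henum : ∀ m : CategoryTheory.End X, m = 1 ∨ m = p ∨ m = b :=
        enum3 hcX 1 p b (Ne.symm hp1) (Ne.symm hb1) (Ne.symm hbnep)
      -- explicit isomorphism with C5
      let f : CategoryTheory.End X → C5 := fun m => if m = 1 then 1 else if m = p then eC else aC
      let g : C5 → CategoryTheory.End X := fun c => if c = 1 then 1 else if c = eC then p else b
      have hf1 : f 1 = 1 := if_pos rfl
      have hfp : f p = eC := by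
        show (if p = 1 then 1 else if p = p then eC else aC) = eC
        rw [if_neg hp1, if_pos rfl]
      have hfb : f b = aC := by
        show (if b = 1 then 1 else if b = p then eC else aC) = aC
        rw [if_neg hb1, if_neg hbnep]
      have hg1 : g 1 = 1 := if_pos rfl
      have hge : g eC = p := by
        show (if eC = 1 then 1 else if eC = eC then p else b) = p
        rw [if_neg heC1, if_pos rfl]
      have hga : g aC = b := by
        show (if aC = 1 then 1 else if aC = eC then p else b) = b
        rw [if_neg haC1, if_neg (Ne.symm heCaC)]
      have hleft : Function.LeftInverse g f := by
        intro m
        rcases henum m with rfl | rfl | rfl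
        · rw [hf1, hg1]
        · rw [hfp, hge]
        · rw [hfb, hga]
      have hright : Function.RightInverse g f := by
        intro c
        rcases enumC5 c with rfl | rfl | rfl
        · rw [hg1, hf1]
        · rw [hge, hfp]
        · rw [hga, hfb]
      have hmul : ∀ m n : CategoryTheory.End X, f (m * n) = f m * f n := by
        intro m n
        rcases henum m with rfl | rfl | rfl <;> rcases henum n with rfl | rfl | rfl <;>
          simp only [one_mul, mul_one, hpp, hbb, hpb, hbp, hf1, hfp, hfb,
            heCeC, haCaC, heCaC', haCeC']
      exact ⟨{ toEquiv := ⟨f, g, hleft, hright⟩, map_mul' := hmul }⟩
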